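/- Two-dimensional Stokes-type area formula for the attribution difference between the straight-line path and an axis-aligned path: let g, h : ℝ → ℝ be continuously differentiable, m ∈ ℝ, and define f(x₁,x₂) = g(x₁) + h(x₂) + m·x₁·x₂. For points a = (a₁,a₂) and b = (b₁,b₂) in ℝ², the attribution to feature 1 along the axis-aligned path a → (b₁,a₂) → b equals g(b₁) − g(a₁) + m·a₂·(b₁ − a₁), and the straight-line Integrated Gradients attribution exceeds it by exactly m times half the swept area: IG_1(f,a,b) − (g(b₁) − g(a₁) + m·a₂·(b₁ − a₁)) = m·(b₁ − a₁)·(b₂ − a₂)/2. -/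

import Mathlib

noncomputable def IG {n : ℕ} (f : (Fin n → ℝ) → ℝ) (a b : Fin n → ℝ) (i : Fin n) : ℝ :=
  (b i - a i) * ∫ t in (0:ℝ)..1, fderiv ℝ f (fun j => a j + t * (b j - a j)) (Pi.single i 1)

noncomputable def proj2 (i : Fin 2) : (Fin 2 → ℝ) →L[ℝ] ℝ := ContinuousLinearMap.proj i

lemma hasFDerivAt_proj2 (i : Fin 2) (x : Fin 2 → ℝ) :
    HasFDerivAt (fun x : Fin 2 → ℝ => x i) (proj2 i) x :=
  (ContinuousLinearMap.proj i : (Fin 2 → ℝ) →L[ℝ] ℝ).hasFDerivAt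

theorem stokes_area_formula_two_dim (g h : ℝ → ℝ)
    (hg : ContDiff ℝ 1 g) (hh : ContDiff ℝ 1 h) (m : ℝ)
    (f : (Fin 2 → ℝ) → ℝ)
    (hf : f = fun x => g (x 0) + h (x 1) + m * x 0 * x 1)
    (a b : Fin 2 → ℝ) :
    (f (Function.update a 0 (b 0)) - f a
        = g (b 0) - g (a 0) + m * a 1 * (b 0 - a 0)) ∧
    IG f a b 0 - (g (b 0) - g (a 0) + m * a 1 * (b 0 - a 0))
        = m * (b 0 - a 0) * (b 1 - a 1) / 2 := by
  constructor
  · subst hf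
    simp [Function.update]
    ring
  · -- key: value of fderiv
    have key : ∀ x : Fin 2 → ℝ,
        fderiv ℝ f x (Pi.single 0 1) = deriv g (x 0) + m * x 1 := by
      intro x
      have h0 : HasFDerivAt (fun x : Fin 2 → ℝ => x 0)
          (proj2 0) x := hasFDerivAt_proj2 0 x
      have h1 : HasFDerivAt (fun x : Fin 2 → ℝ => x 1)
          (proj2 1) x := hasFDerivAt_proj2 1 x
      have hG : HasFDerivAt (fun x : Fin 2 → ℝ => g (x 0))
          (deriv g (x 0) • proj2 0) x :=
        ((hg.differentiable one_ne_zero (x 0)).hasDerivAt).comp_hasFDerivAt x h0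
      have hH : HasFDerivAt (fun x : Fin 2 → ℝ => h (x 1))
          (deriv h (x 1) • proj2 1) x :=
        ((hh.differentiable one_ne_zero (x 1)).hasDerivAt).comp_hasFDerivAt x h1
      have hm0 : HasFDerivAt (fun x : Fin 2 → ℝ => m * x 0)
          (m • proj2 0) x := h0.const_mul m
      have hM : HasFDerivAt (fun x : Fin 2 → ℝ => m * x 0 * x 1)
          ((m * x 0) • proj2 1 +
            x 1 • (m • proj2 0)) x := hm0.mul h1
      have hF : HasFDerivAt f
          ((deriv g (x 0) • proj2 0 +
              deriv h (x 1) • proj2 1) +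
            ((m * x 0) • proj2 1 +
              x 1 • (m • proj2 0))) x := by
        rw [hf]; exact (hG.add hH).add hM
      rw [hF.fderiv]
      have e0 : (Pi.single (0 : Fin 2) (1 : ℝ) : Fin 2 → ℝ) 0 = 1 := by simp
      have e1 : (Pi.single (0 : Fin 2) (1 : ℝ) : Fin 2 → ℝ) 1 = 0 := by
        simp [Pi.single_apply]
      simp [proj2, ContinuousLinearMap.proj_apply, e0, e1]
      ring
    set d := b 0 - a 0 with hd
    set e := b 1 - a 1 with he
    have hcont : Continuous (deriv g) := hg.continuous_deriv le_rfl
    have haff : Continuous (fun t : ℝ => a 0 + t * d) := by continuity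
    have hi1 : IntervalIntegrable (fun t : ℝ => deriv g (a 0 + t * d))
        MeasureTheory.volume 0 1 := ((hcont.comp haff)).intervalIntegrable 0 1
    have hi2 : IntervalIntegrable (fun t : ℝ => m * (a 1 + t * e))
        MeasureTheory.volume 0 1 := (by continuity : Continuous fun t : ℝ => m * (a 1 + t * e)).intervalIntegrable 0 1
    have hIG : IG f a b 0 = d * ((∫ t in (0:ℝ)..1, deriv g (a 0 + t * d)) +
        ∫ t in (0:ℝ)..1, m * (a 1 + t * e)) := by
      rw [IG, ← intervalIntegral.integral_add hi1 hi2]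
      congr 1
      apply intervalIntegral.integral_congr
      intro t _
      simp only [key]
      rfl
    -- first integral times d
    have hI1 : d * ∫ t in (0:ℝ)..1, deriv g (a 0 + t * d) = g (b 0) - g (a 0) := by
      rw [← intervalIntegral.integral_const_mul]
      have : ∀ t ∈ Set.uIcc (0:ℝ) 1,
          HasDerivAt (fun t : ℝ => g (a 0 + t * d)) (d * deriv g (a 0 + t * d)) t := by
        intro t _
        have h1 : HasDerivAt (fun t : ℝ => a 0 + t * d) d t := by
          simpa using ((hasDerivAt_id t).mul_const d).const_add (a 0)
        have h2 : HasDerivAt g (deriv g (a 0 + t * d)) (a 0 + t * d) :=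
          (hg.differentiable one_ne_zero _).hasDerivAt
        have := h2.comp t h1
        simpa [mul_comm, Function.comp_def] using this
      have hint : IntervalIntegrable (fun t : ℝ => d * deriv g (a 0 + t * d))
          MeasureTheory.volume 0 1 := hi1.const_mul d
      rw [intervalIntegral.integral_eq_sub_of_hasDerivAt this hint]
      have e1 : a 0 + 1 * d = b 0 := by rw [hd]; ring
      have e2 : a 0 + 0 * d = a 0 := by ring
      simp only [e1, e2]
    have hI2 : ∫ t in (0:ℝ)..1, m * (a 1 + t * e) = m * (a 1 + e / 2) := by
      rw [intervalIntegral.integral_const_mul]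
      have : ∫ t in (0:ℝ)..1, (a 1 + t * e) =
          (∫ t in (0:ℝ)..1, a 1) + ∫ t in (0:ℝ)..1, t * e := by
        apply intervalIntegral.integral_add
        · exact intervalIntegrable_const
        · exact ((continuous_id.mul continuous_const)).intervalIntegrable 0 1
      rw [this, intervalIntegral.integral_const, intervalIntegral.integral_mul_const,
        integral_id]
      norm_num
      left; ring
    rw [hIG, mul_add, hI1, hI2, hd, he]
    ring
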